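/- Let (R, m) be a commutative Noetherian local ring, S := R[X]_{⟨m,X⟩}, and let J be an ideal of R. Then (JS + XS)/X(JS + XS) is isomorphic to J ⊕ R/J as R-modules. -/

import Mathlib

open Polynomial IsLocalRing CategoryTheory Filter
open scoped ENNReal

noncomputable section

/-- The length of a module, i.e. the length of the longest chain of submodules.
For a vector space this equals its dimension. -/
def moduleLength (R V : Type) [CommRing R] [AddCommGroup V] [Module R V] : ℕ∞ :=
  (Order.krullDim (Submodule R V)).unbotD 0

/-- `Ext_R^n(M, N)`. -/
def extModule (R : Type) [CommRing R] (M N : Type)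
    [AddCommGroup M] [Module R M] [AddCommGroup N] [Module R N] (n : ℕ) : ModuleCat R :=
  ((Ext R (ModuleCat R) n).obj (Opposite.op (ModuleCat.of R M))).obj (ModuleCat.of R N)

/-- The `n`-th Betti number `β_n^R(M) = dim_k Ext_R^n(M, k)` of a module `M` over a local
ring `(R, 𝔪, k)`, where the `k`-dimension is expressed as the length of the module. -/
def betti (R : Type) [CommRing R] [IsLocalRing R] (M : Type)
    [AddCommGroup M] [Module R M] (n : ℕ) : ℕ∞ :=
  moduleLength R (extModule R M (ResidueField R) n)

/-- The complexity `cx_R(M)`: the least `b : ℕ` such that `β_n^R(M) ≤ α * n ^ (b - 1)`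
for some real `α > 0` and all `n ≫ 0`; `⊤` if no such `b` exists. -/
def complexity (R : Type) [CommRing R] [IsLocalRing R] (M : Type)
    [AddCommGroup M] [Module R M] : ℕ∞ :=
  sInf {c : ℕ∞ | ∃ b : ℕ, c = b ∧ ∃ α : ℝ, 0 < α ∧
    ∀ᶠ n : ℕ in atTop, (betti R M n : ℝ≥0∞) ≤ ENNReal.ofReal (α * (n : ℝ) ^ ((b : ℝ) - 1))}

/-- The curvature `curv_R(M) = limsup_n (β_n^R(M)) ^ (1/n)`. -/
def curvature (R : Type) [CommRing R] [IsLocalRing R] (M : Type)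
    [AddCommGroup M] [Module R M] : ℝ≥0∞ :=
  limsup (fun n : ℕ => (betti R M n : ℝ≥0∞) ^ ((1 : ℝ) / n)) atTop

section S

variable (R : Type) [CommRing R] [IsLocalRing R]

/-- The maximal ideal `⟨𝔪, X⟩` of `R[X]`. -/
def mIdeal : Ideal R[X] := (maximalIdeal R).map (C : R →+* R[X]) ⊔ Ideal.span {X}

lemma mIdeal_eq_ker :
    mIdeal R = RingHom.ker ((residue R).comp (evalRingHom (0 : R))) := by
  apply le_antisymm
  · apply sup_le
    · rw [Ideal.map_le_iff_le_comap]
      intro a ha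
      simp only [Ideal.mem_comap, RingHom.mem_ker, RingHom.comp_apply, coe_evalRingHom, eval_C]
      exact (residue_eq_zero_iff a).mpr ha
    · rw [Ideal.span_le]
      rintro _ rfl
      simp [RingHom.mem_ker]
  · intro f hf
    simp only [RingHom.mem_ker, RingHom.comp_apply, coe_evalRingHom] at hf
    have h0 : f.coeff 0 ∈ maximalIdeal R := by
      rw [coeff_zero_eq_eval_zero]
      exact (residue_eq_zero_iff _).mp hf
    have : f = X * f.divX + C (f.coeff 0) := (X_mul_divX_add f).symm
    rw [this]
    apply Ideal.add_mem
    · exact Ideal.mem_sup_right (Ideal.mul_mem_right _ _ (Ideal.subset_span rfl))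
    · exact Ideal.mem_sup_left (Ideal.mem_map_of_mem _ h0)

instance : (mIdeal R).IsMaximal := by
  rw [mIdeal_eq_ker]
  exact RingHom.ker_isMaximal_of_surjective _
    (residue_surjective.comp fun r => ⟨C r, eval_C⟩)

/-- `S := R[X]` localized at the maximal ideal `⟨𝔪, X⟩`. -/
abbrev LocS : Type := Localization.AtPrime (mIdeal R)

instance : Algebra R (LocS R) :=
  ((algebraMap R[X] (LocS R)).comp (algebraMap R R[X])).toAlgebra

/-- The image of `X` in `S`. -/
def xS : LocS R := algebraMap R[X] (LocS R) X

/-- The ideal `JS + XS` of `S`. -/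
def extIdeal (J : Ideal R) : Ideal (LocS R) :=
  J.map (algebraMap R (LocS R)) ⊔ Ideal.span {xS R}

end S

section Dev
set_option maxSynthPendingDepth 3
variable (R : Type) [CommRing R] [IsLocalRing R]

/-- Evaluation-at-0 map `S → R`. -/
def piS : LocS R →+* R :=
  IsLocalization.lift (M := (mIdeal R).primeCompl) (g := evalRingHom (0 : R)) (by
    intro u
    have hu : ↑u ∉ mIdeal R := u.2
    simp only [mIdeal_eq_ker] at hu
    simp only [Ideal.primeCompl, RingHom.mem_ker, RingHom.comp_apply, coe_evalRingHom] at hu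
    by_contra h
    exact hu ((residue_eq_zero_iff _).mpr ((mem_maximalIdeal _).mpr h)))

lemma piS_algebraMap (f : R[X]) : piS R (algebraMap R[X] (LocS R) f) = eval 0 f :=
  IsLocalization.lift_eq _ f

lemma piS_algebraMap' (r : R) : piS R (algebraMap R (LocS R) r) = r := by
  have : algebraMap R (LocS R) r = algebraMap R[X] (LocS R) (C r) := rfl
  rw [this, piS_algebraMap, eval_C]

lemma piS_xS : piS R (xS R) = 0 := by
  rw [xS, piS_algebraMap, eval_X]

lemma xS_mul_eq_zero {a : LocS R} (h : xS R * a = 0) : a = 0 := by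
  obtain ⟨⟨f, u⟩, hfu⟩ := IsLocalization.surj (M := (mIdeal R).primeCompl) a
  have hXf : algebraMap R[X] (LocS R) (X * f) = 0 := by
    rw [map_mul, ← hfu, ← mul_assoc]
    rw [show algebraMap R[X] (LocS R) X = xS R from rfl, h, zero_mul]
  rw [IsLocalization.map_eq_zero_iff (mIdeal R).primeCompl] at hXf
  obtain ⟨v, hv⟩ := hXf
  have hf : algebraMap R[X] (LocS R) f = 0 := by
    rw [IsLocalization.map_eq_zero_iff (mIdeal R).primeCompl]
    refine ⟨v, ?_⟩
    have hX : X * ((v : R[X]) * f) = 0 := by rw [← hv]; ring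
    ext n
    have := congrArg (fun p => Polynomial.coeff p (n+1)) hX
    simpa [coeff_X_mul] using this
  have := IsLocalization.map_units (LocS R) u
  rw [hf] at hfu
  exact (this.mul_left_eq_zero).mp hfu

lemma xS_mul_cancel {a b : LocS R} (h : xS R * a = xS R * b) : a = b := by
  have : xS R * (a - b) = 0 := by rw [mul_sub, h, sub_self]
  have := xS_mul_eq_zero R this
  exact sub_eq_zero.mp this

lemma piS_mem_J {J : Ideal R} {s : LocS R} (hs : s ∈ extIdeal R J) : piS R s ∈ J := by
  have hle : extIdeal R J ≤ J.comap (piS R) := by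
    apply sup_le
    · rw [Ideal.map_le_iff_le_comap]
      intro j hj
      simp [Ideal.mem_comap, piS_algebraMap', hj]
    · rw [Ideal.span_le]
      rintro _ rfl
      simp [Ideal.mem_comap, piS_xS]
  exact hle hs

lemma exists_xS_mul {s : LocS R} (hs : piS R s = 0) : ∃ t, s = xS R * t := by
  obtain ⟨⟨f, u⟩, hfu⟩ := IsLocalization.surj (M := (mIdeal R).primeCompl) s
  have hf0 : eval 0 f = 0 := by
    have := congrArg (piS R) hfu
    rw [map_mul, hs, zero_mul, piS_algebraMap] at this
    exact this.symm
  have hfX : f = X * f.divX := by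
    conv_lhs => rw [← X_mul_divX_add f, coeff_zero_eq_eval_zero, hf0, map_zero, add_zero]
  obtain ⟨w, hw⟩ := IsLocalization.map_units (LocS R) u
  refine ⟨algebraMap R[X] (LocS R) f.divX * ↑w⁻¹, ?_⟩
  have : s * algebraMap R[X] (LocS R) ↑u = xS R * algebraMap R[X] (LocS R) f.divX := by
    rw [hfu]
    show algebraMap R[X] (LocS R) f = _
    conv_lhs => rw [hfX]
    rw [map_mul]; rfl
  calc s = s * algebraMap R[X] (LocS R) ↑u * ↑w⁻¹ := by
        rw [← hw, mul_assoc, Units.mul_inv, mul_one]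
    _ = xS R * (algebraMap R[X] (LocS R) f.divX * ↑w⁻¹) := by rw [this, mul_assoc]

lemma decomp (s : LocS R) : ∃ t, s = algebraMap R (LocS R) (piS R s) + xS R * t := by
  have h0 : piS R (s - algebraMap R (LocS R) (piS R s)) = 0 := by
    rw [map_sub, piS_algebraMap', sub_self]
  obtain ⟨t, ht⟩ := exists_xS_mul R h0
  exact ⟨t, by linear_combination ht⟩

lemma smulRS (r : R) (x : LocS R) : r • x = algebraMap R (LocS R) r * x := by
  rw [← algebraMap_smul R[X] r x, Algebra.smul_def]
  rfl

section Main
variable (J : Ideal R)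

abbrev NX : Submodule (LocS R) ↥(extIdeal R J) :=
  (Ideal.span {xS R} : Ideal (LocS R)) • (⊤ : Submodule (LocS R) ↥(extIdeal R J))

abbrev QI := ↥(extIdeal R J) ⧸ NX R J

lemma memJ {j : R} (hj : j ∈ J) : algebraMap R (LocS R) j ∈ extIdeal R J :=
  Ideal.mem_sup_left (Ideal.mem_map_of_mem _ hj)

lemma memX : xS R ∈ extIdeal R J :=
  Ideal.mem_sup_right (Ideal.subset_span rfl)

lemma coe_smulR (r : R) (v : ↥(extIdeal R J)) :
    ((r • v : ↥(extIdeal R J)) : LocS R) = algebraMap R (LocS R) r * (v : LocS R) := by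
  rw [Submodule.coe_smul_of_tower, smulRS]

lemma mk_smulR (r : R) (v : ↥(extIdeal R J)) :
    Submodule.Quotient.mk (r • v) = r • (Submodule.Quotient.mk v : QI R J) :=
  (Submodule.Quotient.mk_smul (NX R J) r v).symm

lemma mk_smulS (c : LocS R) (v : ↥(extIdeal R J)) :
    Submodule.Quotient.mk (c • v) = c • (Submodule.Quotient.mk v : QI R J) :=
  (Submodule.Quotient.mk_smul (NX R J) c v).symm

lemma mk_x_smul_eq_zero (t : LocS R) (v : ↥(extIdeal R J)) :
    (Submodule.Quotient.mk ((xS R * t) • v) : QI R J) = 0 := by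
  rw [Submodule.Quotient.mk_eq_zero]
  rw [mul_smul]
  exact Submodule.smul_mem_smul (Ideal.subset_span rfl) trivial

lemma smul_eq_piS_smul (c : LocS R) (q : QI R J) : c • q = piS R c • q := by
  obtain ⟨v, rfl⟩ := Submodule.Quotient.mk_surjective _ q
  obtain ⟨t, ht⟩ := decomp R c
  rw [← mk_smulS, ← mk_smulR]
  conv_lhs => rw [ht]
  rw [add_smul, Submodule.Quotient.mk_add, mk_x_smul_eq_zero, add_zero]
  refine congrArg Submodule.Quotient.mk (Subtype.ext ?_)
  rw [coe_smulR, Submodule.coe_smul_of_tower, smul_eq_mul]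

/-- `J → Q`, `j ↦ [algebraMap j]`. -/
def alpha1 : ↥J →ₗ[R] QI R J where
  toFun j := Submodule.Quotient.mk ⟨algebraMap R (LocS R) j, memJ R J j.2⟩
  map_add' a b := by
    rw [← Submodule.Quotient.mk_add]
    refine congrArg Submodule.Quotient.mk (Subtype.ext ?_)
    simp [map_add]
  map_smul' r a := by
    rw [RingHom.id_apply, ← mk_smulR]
    refine congrArg Submodule.Quotient.mk (Subtype.ext ?_)
    rw [coe_smulR]
    simp [Algebra.smul_def, map_mul]

/-- `R → Q`, `r ↦ [x · algebraMap r]`. -/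
def alpha2aux : R →ₗ[R] QI R J where
  toFun r := Submodule.Quotient.mk
    ⟨xS R * algebraMap R (LocS R) r, Ideal.mul_mem_right _ _ (memX R J)⟩
  map_add' a b := by
    rw [← Submodule.Quotient.mk_add]
    refine congrArg Submodule.Quotient.mk (Subtype.ext ?_)
    simp [map_add, mul_add]
  map_smul' r a := by
    rw [RingHom.id_apply, ← mk_smulR]
    refine congrArg Submodule.Quotient.mk (Subtype.ext ?_)
    rw [coe_smulR]
    simp only [Algebra.smul_def, map_mul, smul_eq_mul, Algebra.algebraMap_self_apply]
    ring

lemma alpha2aux_ker : (J : Submodule R R) ≤ LinearMap.ker (alpha2aux R J) := by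
  intro j hj
  rw [LinearMap.mem_ker]
  show (Submodule.Quotient.mk _ : QI R J) = 0
  rw [Submodule.Quotient.mk_eq_zero]
  have h2 : (⟨xS R * algebraMap R (LocS R) j, Ideal.mul_mem_right _ _ (memX R J)⟩ :
      ↥(extIdeal R J)) = xS R • (⟨algebraMap R (LocS R) j, memJ R J hj⟩ :
      ↥(extIdeal R J)) := rfl
  rw [h2]
  exact Submodule.smul_mem_smul (Ideal.subset_span rfl) trivial

def alpha2 : (R ⧸ J) →ₗ[R] QI R J := Submodule.liftQ _ (alpha2aux R J) (alpha2aux_ker R J)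

def alphaMap : (↥J × (R ⧸ J)) →ₗ[R] QI R J := LinearMap.coprod (alpha1 R J) (alpha2 R J)

lemma alphaMap_apply (j : ↥J) (r : R)
    (h : algebraMap R (LocS R) ↑j + xS R * algebraMap R (LocS R) r ∈ extIdeal R J) :
    alphaMap R J (j, Submodule.Quotient.mk r) = Submodule.Quotient.mk
      (⟨algebraMap R (LocS R) ↑j + xS R * algebraMap R (LocS R) r, h⟩ : ↥(extIdeal R J)) := by
  show alpha1 R J j + alpha2 R J (Submodule.Quotient.mk r) = _
  rw [alpha2, Submodule.liftQ_apply]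
  show Submodule.Quotient.mk _ + Submodule.Quotient.mk _ = _
  rw [← Submodule.Quotient.mk_add]
  rfl

open Pointwise in
lemma mem_NX {v : ↥(extIdeal R J)} (hv : v ∈ NX R J) :
    ∃ w : ↥(extIdeal R J), v = xS R • w := by
  rw [NX, Submodule.ideal_span_singleton_smul] at hv
  obtain ⟨w, -, hw⟩ := Set.mem_smul_set.mp
    (by rwa [← SetLike.mem_coe, Submodule.coe_pointwise_smul] at hv)
  exact ⟨w, hw.symm⟩

lemma alpha_inj : Function.Injective (alphaMap R J) := by
  rw [injective_iff_map_eq_zero]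
  rintro ⟨j, rho⟩ h0
  obtain ⟨r, rfl⟩ := Submodule.Quotient.mk_surjective (J : Submodule R R) rho
  have hmem : algebraMap R (LocS R) ↑j + xS R * algebraMap R (LocS R) r ∈ extIdeal R J :=
    Ideal.add_mem _ (memJ R J j.2) (Ideal.mul_mem_right _ _ (memX R J))
  rw [alphaMap_apply R J j r hmem, Submodule.Quotient.mk_eq_zero] at h0
  obtain ⟨w, hw⟩ := mem_NX R J h0
  have hw' : algebraMap R (LocS R) ↑j + xS R * algebraMap R (LocS R) r = xS R * (w : LocS R) :=
    congrArg Subtype.val hw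
  have hj0 : (j : R) = 0 := by
    have := congrArg (piS R) hw'
    simpa [piS_algebraMap', piS_xS] using this
  have hj0' : j = 0 := Subtype.ext hj0
  have hr : algebraMap R (LocS R) r = (w : LocS R) := by
    apply xS_mul_cancel R
    rw [← hw', hj0, map_zero, zero_add]
  have hrJ : r ∈ J := by
    have := piS_mem_J R (J := J) w.2
    rwa [← hr, piS_algebraMap'] at this
  rw [hj0']
  exact Prod.ext rfl ((Submodule.Quotient.mk_eq_zero _).mpr hrJ)

def PSub : Submodule (LocS R) (QI R J) where
  carrier := LinearMap.range (alphaMap R J)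
  add_mem' := fun h1 h2 => (LinearMap.range (alphaMap R J)).add_mem h1 h2
  zero_mem' := (LinearMap.range (alphaMap R J)).zero_mem
  smul_mem' c q hq := by
    show c • q ∈ LinearMap.range (alphaMap R J)
    rw [smul_eq_piS_smul]
    exact Submodule.smul_mem _ _ hq

lemma mk_mem_PSub (s : LocS R) (h : s ∈ extIdeal R J) :
    (Submodule.Quotient.mk (⟨s, h⟩ : ↥(extIdeal R J)) : QI R J) ∈ PSub R J := by
  obtain ⟨a, ha, b, hb, rfl⟩ := Submodule.mem_sup.mp h
  have ha' : a ∈ extIdeal R J := Ideal.mem_sup_left ha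
  have hb' : b ∈ extIdeal R J := Ideal.mem_sup_right hb
  have hsplit : (Submodule.Quotient.mk (⟨a + b, h⟩ : ↥(extIdeal R J)) : QI R J) =
      Submodule.Quotient.mk (⟨a, ha'⟩ : ↥(extIdeal R J)) +
      Submodule.Quotient.mk (⟨b, hb'⟩ : ↥(extIdeal R J)) := by
    rw [← Submodule.Quotient.mk_add]
    rfl
  rw [hsplit]
  refine add_mem ?_ ?_
  · clear hsplit h hb' hb b
    induction ha using Submodule.span_induction with
    | mem x hx =>
      obtain ⟨j, hj, rfl⟩ := hx
      refine ⟨(⟨j, hj⟩, 0), ?_⟩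
      show alpha1 R J _ + alpha2 R J 0 = _
      rw [map_zero, add_zero]
      rfl
    | zero =>
      have : (Submodule.Quotient.mk (⟨0, ha'⟩ : ↥(extIdeal R J)) : QI R J) = 0 := by
        rw [show (⟨0, ha'⟩ : ↥(extIdeal R J)) = 0 from Subtype.ext rfl,
          Submodule.Quotient.mk_zero]
      rw [this]; exact zero_mem _
    | add x y hx hy ihx ihy =>
      have hx' : x ∈ extIdeal R J := Ideal.mem_sup_left hx
      have hy' : y ∈ extIdeal R J := Ideal.mem_sup_left hy
      have : (Submodule.Quotient.mk (⟨x + y, ha'⟩ : ↥(extIdeal R J)) : QI R J) =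
          Submodule.Quotient.mk (⟨x, hx'⟩ : ↥(extIdeal R J)) +
          Submodule.Quotient.mk (⟨y, hy'⟩ : ↥(extIdeal R J)) := by
        rw [← Submodule.Quotient.mk_add]; rfl
      rw [this]
      exact add_mem (ihx hx') (ihy hy')
    | smul c x hx ihx =>
      have hx' : x ∈ extIdeal R J := Ideal.mem_sup_left hx
      have : (⟨c • x, ha'⟩ : ↥(extIdeal R J)) = c • (⟨x, hx'⟩ : ↥(extIdeal R J)) := rfl
      rw [this, mk_smulS]
      exact Submodule.smul_mem _ _ (ihx hx')
  · obtain ⟨c, rfl⟩ := Ideal.mem_span_singleton'.mp hb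
    have : (⟨c * xS R, hb'⟩ : ↥(extIdeal R J)) = c • (⟨xS R, memX R J⟩ : ↥(extIdeal R J)) := rfl
    rw [this, mk_smulS]
    refine Submodule.smul_mem _ _ ?_
    refine ⟨(0, Submodule.Quotient.mk 1), ?_⟩
    show alpha1 R J 0 + alpha2 R J (Submodule.Quotient.mk 1) = _
    rw [map_zero, zero_add, alpha2, Submodule.liftQ_apply]
    refine congrArg Submodule.Quotient.mk (Subtype.ext ?_)
    show xS R * algebraMap R (LocS R) 1 = xS R
    rw [map_one, mul_one]

lemma alpha_surj : Function.Surjective (alphaMap R J) := by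
  intro q
  obtain ⟨⟨s, hs⟩, rfl⟩ := Submodule.Quotient.mk_surjective _ q
  exact mk_mem_PSub R J s hs

end Main

end Dev
/-- `r` is integral over the ideal `J`: there is an equation
`r^n + a₁ r^{n-1} + ⋯ + aₙ = 0` with `aᵢ ∈ J^i`. -/
def IsIntegralOverIdeal {R : Type} [CommRing R] (J : Ideal R) (r : R) : Prop :=
  ∃ n : ℕ, 0 < n ∧ ∃ a : ℕ → R, (∀ i ∈ Finset.Icc 1 n, a i ∈ J ^ i) ∧
    r ^ n + ∑ i ∈ Finset.Icc 1 n, a i * r ^ (n - i) = 0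

/-- An ideal is integrally closed if it contains every element integral over it. -/
def IdealIsIntegrallyClosed {R : Type} [CommRing R] (J : Ideal R) : Prop :=
  ∀ r : R, IsIntegralOverIdeal J r → r ∈ J

/-- `M` has finite projective dimension, characterized by the eventual vanishing of
`Ext_R^i(M, -)`. -/
def HasFiniteProjDim (R : Type) [CommRing R] (M : Type) [AddCommGroup M] [Module R M] : Prop :=
  ∃ n : ℕ, ∀ i : ℕ, n < i → ∀ (N : Type) (_ : AddCommGroup N) (_ : Module R N),
    Subsingleton (extModule R M N i)

/-- `M` has finite injective dimension, characterized by the eventual vanishing of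
`Ext_R^i(-, M)`. -/
def HasFiniteInjDim (R : Type) [CommRing R] (M : Type) [AddCommGroup M] [Module R M] : Prop :=
  ∃ n : ℕ, ∀ i : ℕ, n < i → ∀ (N : Type) (_ : AddCommGroup N) (_ : Module R N),
    Subsingleton (extModule R N M i)

/-- A (finitely generated) module `M` is totally reflexive if the canonical map to its double
dual is bijective and `Ext_R^i(M, R) = 0 = Ext_R^i(M^*, R)` for all `i > 0`. -/
def IsTotallyReflexive (R : Type) [CommRing R] (M : Type) [AddCommGroup M] [Module R M] : Prop :=
  Function.Bijective (Module.Dual.eval R M) ∧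
    ∀ i : ℕ, 0 < i → Subsingleton (extModule R M R i) ∧
      Subsingleton (extModule R (Module.Dual R M) R i)

/-- `G-dim_R(M) ≤ n`: there is an exact sequence `0 → G_n → ⋯ → G_0 → M → 0` with all `G_i`
totally reflexive; phrased recursively via kernels of surjections from totally
reflexive modules. -/
def GdimLE (R : Type) [CommRing R] : ℕ → (M : Type) → [AddCommGroup M] → [Module R M] → Prop
  | 0, M, _, _ => IsTotallyReflexive R M
  | (n + 1), M, _, _ => ∃ (G : Type) (_ : AddCommGroup G) (_ : Module R G) (f : G →ₗ[R] M),
      IsTotallyReflexive R G ∧ Function.Surjective f ∧ GdimLE R n (LinearMap.ker f)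

/-- The Gorenstein dimension `G-dim_R(M) ∈ ℕ∞`. -/
def Gdim (R : Type) [CommRing R] (M : Type) [AddCommGroup M] [Module R M] : ℕ∞ :=
  sInf {c : ℕ∞ | ∃ n : ℕ, c = n ∧ GdimLE R n M}

/-- A local ring is regular if its maximal ideal is generated by `dim R` elements. -/
def IsRegularLocal (R : Type) [CommRing R] [IsLocalRing R] : Prop :=
  ∃ s : Finset R, Ideal.span (s : Set R) = maximalIdeal R ∧
    (s.card : WithBot ℕ∞) = ringKrullDim R

/-- A Noetherian local ring `R` is a complete intersection if its `𝔪`-adic completion is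
isomorphic to `Q/(f₁, …, f_c)` for some regular local ring `Q` and a `Q`-regular
sequence `f₁, …, f_c`. -/
def IsCompleteIntersectionLocal (R : Type) [CommRing R] [IsLocalRing R] : Prop :=
  ∃ (Q : Type) (_ : CommRing Q) (_ : IsLocalRing Q) (_ : IsNoetherianRing Q),
    IsRegularLocal Q ∧ ∃ fs : List Q, RingTheory.Sequence.IsRegular Q fs ∧
      Nonempty ((AdicCompletion (maximalIdeal R) R) ≃+* (Q ⧸ Ideal.ofList fs))

set_option maxSynthPendingDepth 3

/-- `(JS + XS)/X(JS + XS) ≅ J ⊕ R/J` as `R`-modules (the `R`-module structure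
on the quotient being restriction of scalars along `R → S`, which corresponds to the
identification `S/XS ≅ R`). -/
theorem stmt_1 (R : Type) [CommRing R] [IsLocalRing R] [IsNoetherianRing R] (J : Ideal R) :
    Nonempty ((↥(extIdeal R J) ⧸
        ((Ideal.span {xS R} : Ideal (LocS R)) • (⊤ : Submodule (LocS R) ↥(extIdeal R J))))
      ≃ₗ[R] (↥J × (R ⧸ J))) :=
  ⟨(LinearEquiv.ofBijective (alphaMap R J) ⟨alpha_inj R J, alpha_surj R J⟩).symm⟩
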